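/- For all integers k ≥ 1 and n ≥ 6, the chromatic number of the square of T_{6k,n} = C_{6k} □ C_n satisfies χ(T_{6k,n}²) ≤ 6. -/

import Mathlib

open SimpleGraph

/-- The square of a simple graph `G`: distinct vertices are adjacent iff they are
adjacent in `G` or have a common neighbor in `G` (i.e. are at distance at most 2). -/
def SimpleGraph.square {V : Type*} (G : SimpleGraph V) : SimpleGraph V where
  Adj u v := u ≠ v ∧ (G.Adj u v ∨ ∃ w, G.Adj u w ∧ G.Adj w v)
  symm := ⟨fun u v => by
    rintro ⟨h, h' | ⟨w, hw1, hw2⟩⟩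
    exacts [⟨h.symm, Or.inl h'.symm⟩, ⟨h.symm, Or.inr ⟨w, hw2.symm, hw1.symm⟩⟩]⟩
  loopless := ⟨fun v => by simp⟩

/-- The toroidal grid `T_{m,n} = C_m □ C_n`. -/
def toroidalGrid (m n : ℕ) : SimpleGraph (Fin m × Fin n) :=
  SimpleGraph.cycleGraph m □ SimpleGraph.cycleGraph n

/-- The independence number of a graph: the maximum size of an independent set,
i.e. the clique number of the complement graph. -/
noncomputable def SimpleGraph.indepNum' {V : Type*} (G : SimpleGraph V) : ℕ :=
  Gᶜ.cliqueNum



def ee (r t : ℕ) : ZMod 6 :=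
  if r = 0 then 0
  else if r = 1 then (if t = 0 then 0 else if t = 1 then 1 else if t = 2 then 3 else 4)
  else (if t = 0 then 0 else if t = 1 then 1 else if t = 2 then 1 else 2)

def FF (n t : ℕ) : ZMod 6 := ((2 * t : ℕ) : ZMod 6) + ee (n % 3) t

lemma h6 : (6 : ZMod 6) = 0 := by decide

lemma ee0 (t : ℕ) : ee 0 t = 0 := by unfold ee; rw [if_pos rfl]
lemma ee1_big (t : ℕ) (ht : 3 ≤ t) : ee 1 t = 4 := by
  have h0 : ¬(t = 0) := by omega
  have h1 : ¬(t = 1) := by omega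
  have h2 : ¬(t = 2) := by omega
  simp only [ee, if_neg h0, if_neg h1, if_neg h2]
  norm_num
lemma ee2_big (t : ℕ) (ht : 3 ≤ t) : ee 2 t = 2 := by
  have h0 : ¬(t = 0) := by omega
  have h1 : ¬(t = 1) := by omega
  have h2 : ¬(t = 2) := by omega
  simp only [ee, if_neg h0, if_neg h1, if_neg h2]
  norm_num

lemma Fstep (n t : ℕ) (hn : 6 ≤ n) (ht : t < n) :
    FF n ((t+1) % n) - FF n t = 2 ∨ FF n ((t+1) % n) - FF n t = 3 ∨
    FF n ((t+1) % n) - FF n t = 4 := by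
  have hr : n % 3 = 0 ∨ n % 3 = 1 ∨ n % 3 = 2 := by omega
  by_cases h : t + 1 < n
  · rw [Nat.mod_eq_of_lt h]
    rcases hr with hr | hr | hr
    · left; unfold FF; rw [hr, ee0, ee0]; push_cast; ring
    · rcases t with _ | _ | _ | t
      · right; left; unfold FF; rw [hr]; decide
      · right; right; unfold FF; rw [hr]; decide
      · right; left; unfold FF; rw [hr, ee1_big 3 (by omega)]; decide
      · left; unfold FF
        rw [hr, ee1_big (t+3+1) (by omega), ee1_big (t+3) (by omega)]
        push_cast; ring
    · rcases t with _ | _ | _ | t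
      · right; left; unfold FF; rw [hr]; decide
      · left; unfold FF; rw [hr]; decide
      · right; left; unfold FF; rw [hr, ee2_big 3 (by omega)]; decide
      · left; unfold FF
        rw [hr, ee2_big (t+3+1) (by omega), ee2_big (t+3) (by omega)]
        push_cast; ring
  · have hteq : t + 1 = n := by omega
    rw [hteq, Nat.mod_self]
    left
    rcases hr with hr | hr | hr
    · obtain ⟨p, hp⟩ : ∃ p, t = 3 * p + 2 := ⟨t / 3, by omega⟩
      subst hp
      unfold FF; rw [hr, ee0, ee0]; push_cast
      linear_combination (-(p : ZMod 6) - 1) * h6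
    · obtain ⟨p, hp⟩ : ∃ p, t = 3 * p + 3 := ⟨t / 3 - 1, by omega⟩
      subst hp
      unfold FF; rw [hr, ee1_big (3*p+3) (by omega), show ee 1 0 = 0 by decide]; push_cast
      linear_combination (-(p : ZMod 6) - 2) * h6
    · obtain ⟨p, hp⟩ : ∃ p, t = 3 * p + 1 := ⟨t / 3, by omega⟩
      subst hp
      unfold FF; rw [hr, ee2_big (3*p+1) (by omega), show ee 2 0 = 0 by decide]; push_cast
      linear_combination (-(p : ZMod 6) - 1) * h6

lemma Fdstep (n t : ℕ) (hn : 6 ≤ n) (ht : t < n) :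
    FF n ((t+2) % n) - FF n t ≠ 0 := by
  have hr : n % 3 = 0 ∨ n % 3 = 1 ∨ n % 3 = 2 := by omega
  have key : FF n ((t+2) % n) - FF n t = 1 ∨ FF n ((t+2) % n) - FF n t = 4 ∨
      FF n ((t+2) % n) - FF n t = 5 := by
    by_cases h : t + 2 < n
    · rw [Nat.mod_eq_of_lt h]
      rcases hr with hr | hr | hr
      · right; left; unfold FF; rw [hr, ee0, ee0]; push_cast; ring
      · rcases t with _ | _ | _ | t
        · left; unfold FF; rw [hr]; decide
        · left; unfold FF; rw [hr, ee1_big 3 (by omega)]; decide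
        · right; right; unfold FF; rw [hr, ee1_big 4 (by omega)]; decide
        · right; left; unfold FF
          rw [hr, ee1_big (t+3+2) (by omega), ee1_big (t+3) (by omega)]
          push_cast; ring
      · rcases t with _ | _ | _ | t
        · right; right; unfold FF; rw [hr]; decide
        · right; right; unfold FF; rw [hr, ee2_big 3 (by omega)]; decide
        · right; right; unfold FF; rw [hr, ee2_big 4 (by omega)]; decide
        · right; left; unfold FF
          rw [hr, ee2_big (t+3+2) (by omega), ee2_big (t+3) (by omega)]
          push_cast; ring
    · by_cases h2 : t + 2 = n
      · rw [h2, Nat.mod_self]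
        right; left
        rcases hr with hr | hr | hr
        · obtain ⟨p, hp⟩ : ∃ p, t = 3 * p + 1 := ⟨t / 3, by omega⟩
          subst hp
          unfold FF; rw [hr, ee0, ee0]; push_cast
          linear_combination (-(p : ZMod 6) - 1) * h6
        · obtain ⟨p, hp⟩ : ∃ p, t = 3 * p + 2 := ⟨t / 3, by omega⟩
          subst hp
          unfold FF; rw [hr, ee1_big (3*p+2) (by omega), show ee 1 0 = 0 by decide]; push_cast
          linear_combination (-(p : ZMod 6) - 2) * h6
        · obtain ⟨p, hp⟩ : ∃ p, t = 3 * p + 3 := ⟨t / 3 - 1, by omega⟩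
          subst hp
          unfold FF; rw [hr, ee2_big (3*p+3) (by omega), show ee 2 0 = 0 by decide]; push_cast
          linear_combination (-(p : ZMod 6) - 2) * h6
      · have hteq : t + 2 = n + 1 := by omega
        rw [hteq, Nat.add_mod_left, Nat.mod_eq_of_lt (by omega : 1 < n)]
        rcases hr with hr | hr | hr
        · right; left
          obtain ⟨p, hp⟩ : ∃ p, t = 3 * p + 2 := ⟨t / 3, by omega⟩
          subst hp
          unfold FF; rw [hr, ee0, ee0]; push_cast
          linear_combination (-(p : ZMod 6) - 1) * h6
        · right; right
          obtain ⟨p, hp⟩ : ∃ p, t = 3 * p + 3 := ⟨t / 3 - 1, by omega⟩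
          subst hp
          unfold FF
          rw [hr, ee1_big (3*p+3) (by omega), show ee 1 1 = 1 by decide]; push_cast
          linear_combination (-(p : ZMod 6) - 2) * h6
        · right; right
          obtain ⟨p, hp⟩ : ∃ p, t = 3 * p + 1 := ⟨t / 3, by omega⟩
          subst hp
          unfold FF
          rw [hr, ee2_big (3*p+1) (by omega), show ee 2 1 = 1 by decide]; push_cast
          linear_combination (-(p : ZMod 6) - 1) * h6
  rcases key with h | h | h <;> rw [h] <;> decide

lemma castmod {m : ℕ} (hm : 6 ∣ m) (x : ℕ) : ((x % m : ℕ) : ZMod 6) = (x : ZMod 6) := by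
  obtain ⟨c, rfl⟩ := hm
  conv_rhs => rw [← Nat.mod_add_div x (6*c)]
  push_cast
  rw [h6]
  ring

def rho (m : ℕ) (x : Fin m) : ZMod 6 := (x.val : ZMod 6)

lemma fin_val_one {m : ℕ} [NeZero m] (hm : 2 ≤ m) : ((1 : Fin m) : ℕ) = 1 := by
  rw [Fin.val_one']; exact Nat.mod_eq_of_lt (by omega)

lemma rho_add_one {m : ℕ} [NeZero m] (hm6 : 6 ≤ m) (hm : 6 ∣ m) (x : Fin m) :
    rho m (x + 1) = rho m x + 1 := by
  unfold rho
  rw [Fin.add_def, fin_val_one (by omega), castmod hm]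
  push_cast; ring

lemma cyc_adj {m : ℕ} [NeZero m] (hm : 2 ≤ m) {u v : Fin m}
    (h : (cycleGraph m).Adj u v) : u = v + 1 ∨ v = u + 1 := by
  rw [cycleGraph_adj'] at h
  rcases h with h | h
  · left
    have h2 : u - v = 1 := Fin.ext (by rw [fin_val_one hm]; exact h)
    rw [sub_eq_iff_eq_add] at h2
    rw [h2, add_comm]
  · right
    have h2 : v - u = 1 := Fin.ext (by rw [fin_val_one hm]; exact h)
    rw [sub_eq_iff_eq_add] at h2
    rw [h2, add_comm]

lemma val_add_one {n : ℕ} [NeZero n] (hn : 2 ≤ n) (j : Fin n) :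
    ((j + 1 : Fin n) : ℕ) = (j.val + 1) % n := by
  rw [Fin.add_def, fin_val_one hn]

lemma val_add_two {n : ℕ} [NeZero n] (hn : 2 ≤ n) (j : Fin n) :
    ((j + 1 + 1 : Fin n) : ℕ) = (j.val + 2) % n := by
  rw [val_add_one hn (j+1), val_add_one hn j, Nat.mod_add_mod]

lemma row_diff {m : ℕ} [NeZero m] (hm6 : 6 ≤ m) (hdvd : 6 ∣ m) {u v : Fin m}
    (h : (cycleGraph m).Adj u v) :
    rho m v - rho m u = 1 ∨ rho m v - rho m u = -1 := by
  rcases cyc_adj (by omega) h with h | h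
  · right; rw [h, rho_add_one hm6 hdvd]; ring
  · left; rw [h, rho_add_one hm6 hdvd]; ring

lemma row_diff2 {m : ℕ} [NeZero m] (hm6 : 6 ≤ m) (hdvd : 6 ∣ m) {u w v : Fin m}
    (h1 : (cycleGraph m).Adj u w) (h2 : (cycleGraph m).Adj w v) :
    u = v ∨ rho m v - rho m u = 2 ∨ rho m v - rho m u = -2 := by
  rcases cyc_adj (by omega) h1 with h1 | h1 <;> rcases cyc_adj (by omega) h2 with h2 | h2
  · -- u = w + 1, w = v + 1
    right; right
    rw [h1, h2, rho_add_one hm6 hdvd, rho_add_one hm6 hdvd]; ring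
  · -- u = w + 1, v = w + 1
    left; rw [h1, h2]
  · -- w = u + 1, w = v + 1
    left; exact add_right_cancel (h1.symm.trans h2)
  · -- w = u + 1, v = w + 1
    right; left
    rw [h2, h1, rho_add_one hm6 hdvd, rho_add_one hm6 hdvd]; ring

lemma col_diff {n : ℕ} [NeZero n] (hn : 6 ≤ n) {u v : Fin n}
    (h : (cycleGraph n).Adj u v) :
    FF n v.val - FF n u.val = 2 ∨ FF n v.val - FF n u.val = 3 ∨
    FF n v.val - FF n u.val = 4 := by
  rcases cyc_adj (by omega) h with h | h
  · have := Fstep n v.val hn v.isLt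
    rw [← val_add_one (by omega) v, ← h] at this
    rcases this with h' | h' | h'
    · right; right; linear_combination -h' - h6
    · right; left; linear_combination -h' - h6
    · left; linear_combination -h' - h6
  · have := Fstep n u.val hn u.isLt
    rw [← val_add_one (by omega) u, ← h] at this
    exact this

lemma col_diff2 {n : ℕ} [NeZero n] (hn : 6 ≤ n) {u w v : Fin n}
    (h1 : (cycleGraph n).Adj u w) (h2 : (cycleGraph n).Adj w v) :
    u = v ∨ FF n v.val - FF n u.val ≠ 0 := by
  rcases cyc_adj (by omega) h1 with h1 | h1 <;> rcases cyc_adj (by omega) h2 with h2 | h2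
  · -- u = w + 1, w = v + 1 : u = v + 1 + 1
    right
    have := Fdstep n v.val hn v.isLt
    rw [← val_add_two (by omega) v, ← h2, ← h1] at this
    intro hc; exact this (by linear_combination -hc)
  · left; rw [h1, h2]
  · left; exact add_right_cancel (h1.symm.trans h2)
  · -- v = u + 1 + 1
    right
    have := Fdstep n u.val hn u.isLt
    rw [← val_add_two (by omega) u, ← h1, ← h2] at this
    exact this

lemma ne_of_sub' {x y : ZMod 6} (d : ZMod 6) (h : y - x = d) (hd : d ≠ 0) : x ≠ y :=
  fun he => hd (by rw [← h, he, sub_self])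


lemma valid {k n : ℕ} (hk : 1 ≤ k) (hn : 6 ≤ n) {u v : Fin (6*k) × Fin n}
    (h : (toroidalGrid (6*k) n).square.Adj u v) :
    rho (6*k) u.1 + FF n u.2.val ≠ rho (6*k) v.1 + FF n v.2.val := by
  have hm6 : 6 ≤ 6*k := by omega
  have hdvd : 6 ∣ 6*k := ⟨k, rfl⟩
  haveI : NeZero (6*k) := ⟨by omega⟩
  haveI : NeZero n := ⟨by omega⟩
  obtain ⟨i, j⟩ := u
  obtain ⟨i', j'⟩ := v
  obtain ⟨hne, hc | ⟨⟨a, b⟩, h1, h2⟩⟩ := h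
  · simp only [toroidalGrid, boxProd_adj] at hc
    rcases hc with ⟨hr, hj⟩ | ⟨hcj, hi⟩
    · rcases row_diff hm6 hdvd hr with h' | h'
      · exact ne_of_sub' 1 (by rw [hj]; linear_combination h') (by decide)
      · exact ne_of_sub' (-1) (by rw [hj]; linear_combination h') (by decide)
    · rcases col_diff hn hcj with h' | h' | h'
      · exact ne_of_sub' 2 (by rw [hi]; linear_combination h') (by decide)
      · exact ne_of_sub' 3 (by rw [hi]; linear_combination h') (by decide)
      · exact ne_of_sub' 4 (by rw [hi]; linear_combination h') (by decide)
  · simp only [toroidalGrid, boxProd_adj] at h1 h2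
    rcases h1 with ⟨hr1, hj1⟩ | ⟨hc1, hi1⟩ <;> rcases h2 with ⟨hr2, hj2⟩ | ⟨hc2, hi2⟩
    · -- row, row
      have hj : j = j' := hj1.trans hj2
      rcases row_diff2 hm6 hdvd hr1 hr2 with heq | h' | h'
      · exact absurd (by rw [heq, hj]) hne
      · exact ne_of_sub' 2 (by rw [hj]; linear_combination h') (by decide)
      · exact ne_of_sub' (-2) (by rw [hj]; linear_combination h') (by decide)
    · -- row then col
      rw [hi2] at hr1
      rw [← hj1] at hc2
      rcases row_diff hm6 hdvd hr1 with h' | h' <;> rcases col_diff hn hc2 with hs | hs | hs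
      · exact ne_of_sub' 3 (by linear_combination h' + hs) (by decide)
      · exact ne_of_sub' 4 (by linear_combination h' + hs) (by decide)
      · exact ne_of_sub' 5 (by linear_combination h' + hs) (by decide)
      · exact ne_of_sub' 1 (by linear_combination h' + hs) (by decide)
      · exact ne_of_sub' 2 (by linear_combination h' + hs) (by decide)
      · exact ne_of_sub' 3 (by linear_combination h' + hs) (by decide)
    · -- col then row
      rw [← hi1] at hr2
      rw [hj2] at hc1
      rcases row_diff hm6 hdvd hr2 with h' | h' <;> rcases col_diff hn hc1 with hs | hs | hs
      · exact ne_of_sub' 3 (by linear_combination h' + hs) (by decide)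
      · exact ne_of_sub' 4 (by linear_combination h' + hs) (by decide)
      · exact ne_of_sub' 5 (by linear_combination h' + hs) (by decide)
      · exact ne_of_sub' 1 (by linear_combination h' + hs) (by decide)
      · exact ne_of_sub' 2 (by linear_combination h' + hs) (by decide)
      · exact ne_of_sub' 3 (by linear_combination h' + hs) (by decide)
    · -- col, col
      have hi : i = i' := hi1.trans hi2
      rcases col_diff2 hn hc1 hc2 with heq | h'
      · exact absurd (by rw [heq, hi]) hne
      · exact ne_of_sub' _ (by rw [hi]; ring) h'

theorem stmt9 (k n : ℕ) (hk : 1 ≤ k) (hn : 6 ≤ n) :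
    (toroidalGrid (6 * k) n).square.chromaticNumber ≤ 6 := by
  haveI : NeZero n := ⟨by omega⟩
  have hcol : (toroidalGrid (6*k) n).square.Colorable 6 := by
    have C : (toroidalGrid (6*k) n).square.Coloring (ZMod 6) :=
      SimpleGraph.Coloring.mk (fun p => rho (6*k) p.1 + FF n p.2.val)
        (fun {u v} h => valid hk hn h)
    have hc := C.colorable
    rwa [ZMod.card] at hc
  have hle := hcol.chromaticNumber_le
  exact_mod_cast hle
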